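/- For every α > 0 and all s, t > 0, one has (t^α · (t s)^α) / ((1 + t^{2α})(1 + (t s)^{2α})) ≤ s^α / (1 + s^{2α}). Moreover the supremum over t > 0 of the left-hand side equals s^α/(1+s^α)². -/
import Mathlib

private lemma rw_form (α s : ℝ) (hα : 0 < α) (hs : 0 < s) (t : ℝ) (ht : 0 < t) :
    (t ^ α * (t * s) ^ α) / ((1 + t ^ (2 * α)) * (1 + (t * s) ^ (2 * α)))
      = (t ^ α * (t ^ α * s ^ α)) /
        ((1 + (t ^ α) ^ 2) * (1 + (t ^ α * s ^ α) ^ 2)) := by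
  have hts : (0:ℝ) < t * s := mul_pos ht hs
  have h2 : ∀ x : ℝ, 0 < x → x ^ (2 * α) = (x ^ α) ^ 2 := by
    intro x hx
    rw [mul_comm, Real.rpow_mul hx.le]
    norm_num
  rw [h2 t ht, h2 (t * s) hts, Real.mul_rpow ht.le hs.le]

private lemma aux_le (u σ : ℝ) (hu : 0 < u) (hσ : 0 < σ) :
    (u * (u * σ)) / ((1 + u ^ 2) * (1 + (u * σ) ^ 2)) ≤ σ / (1 + σ) ^ 2 := by
  rw [div_le_div_iff₀ (by positivity) (by positivity)]
  nlinarith [mul_nonneg hσ.le (sq_nonneg (1 - σ * u ^ 2)), sq_nonneg u, sq_nonneg σ]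

theorem stmt_1 (α s : ℝ) (hα : 0 < α) (hs : 0 < s) :
    (∀ t : ℝ, 0 < t →
      (t ^ α * (t * s) ^ α) / ((1 + t ^ (2 * α)) * (1 + (t * s) ^ (2 * α)))
        ≤ s ^ α / (1 + s ^ (2 * α))) ∧
    IsGreatest
      ((fun t : ℝ =>
        (t ^ α * (t * s) ^ α) / ((1 + t ^ (2 * α)) * (1 + (t * s) ^ (2 * α)))) ''
        Set.Ioi 0)
      (s ^ α / (1 + s ^ α) ^ 2) := by
  have hσ : (0:ℝ) < s ^ α := Real.rpow_pos_of_pos hs α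
  have hσ2 : s ^ (2 * α) = (s ^ α) ^ 2 := by
    rw [mul_comm, Real.rpow_mul hs.le]; norm_num
  set σ := s ^ α with hσdef
  have hub : ∀ t : ℝ, 0 < t →
      (t ^ α * (t * s) ^ α) / ((1 + t ^ (2 * α)) * (1 + (t * s) ^ (2 * α)))
        ≤ σ / (1 + σ) ^ 2 := by
    intro t ht
    rw [rw_form α s hα hs t ht]
    exact aux_le _ _ (Real.rpow_pos_of_pos ht α) hσ
  refine ⟨?_, ?_, ?_⟩
  · intro t ht
    refine (hub t ht).trans ?_
    rw [hσ2, div_le_div_iff₀ (by positivity) (by positivity)]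
    nlinarith [sq_nonneg σ, hσ.le]
  · -- membership: witness t = s^(-1/2)
    refine ⟨s ^ (-(1/2) : ℝ), Set.mem_Ioi.mpr (Real.rpow_pos_of_pos hs _), ?_⟩
    have ht : (0:ℝ) < s ^ (-(1/2) : ℝ) := Real.rpow_pos_of_pos hs _
    beta_reduce
    rw [rw_form α s hα hs _ ht]
    set u := (s ^ (-(1/2) : ℝ)) ^ α with hudef
    have hu : 0 < u := Real.rpow_pos_of_pos ht α
    have hu2 : u ^ 2 * σ = 1 := by
      rw [hudef, hσdef, ← Real.rpow_mul hs.le, ← Real.rpow_natCast (s ^ (-(1/2) * α)) 2,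
        ← Real.rpow_mul hs.le, ← Real.rpow_add hs]
      norm_num
      rw [show -(1 / 2 * α * 2) + α = 0 by ring, Real.rpow_zero]
    rw [div_eq_div_iff (by positivity) (by positivity)]
    linear_combination (σ - σ ^ 2 * u ^ 2) * hu2
  · rintro x ⟨t, ht, rfl⟩
    exact hub t ht
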